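/- For a positive integer n and j ∈ {1,…,2n} with j ≥ 2, the continued fraction of √(n²+j) has period of length 2 if and only if j divides 2n, in which case √(n²+j) = [n; 2n/j, 2n repeated]. -/

import Mathlib

/-- The sequence of complete quotients of the continued fraction algorithm. -/
noncomputable def cfX (x : ℝ) : ℕ → ℝ
  | 0 => x
  | n + 1 =>
    if cfX x n - ⌊cfX x n⌋ = 0 then 0 else 1 / (cfX x n - ⌊cfX x n⌋)

/-- The partial quotients (continued fraction expansion) of a real number. -/
noncomputable def cfA (x : ℝ) (n : ℕ) : ℤ := ⌊cfX x n⌋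

lemma cfX_zero (x : ℝ) : cfX x 0 = x := rfl

lemma cfX_irrational {x : ℝ} (h : Irrational x) : ∀ m, Irrational (cfX x m)
  | 0 => h
  | m + 1 => by
    have ih := cfX_irrational h m
    have h1 : Irrational (cfX x m - ⌊cfX x m⌋) := ih.sub_intCast _
    have h2 : cfX x m - ⌊cfX x m⌋ ≠ 0 := h1.ne_zero
    rw [show cfX x (m+1) = if cfX x m - ⌊cfX x m⌋ = 0 then 0 else
      1 / (cfX x m - ⌊cfX x m⌋) from rfl, if_neg h2, one_div]
    exact h1.inv

lemma cfX_succ {x : ℝ} (h : Irrational x) (m : ℕ) :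
    cfX x (m + 1) = 1 / (cfX x m - ⌊cfX x m⌋) := by
  have h2 : cfX x m - ⌊cfX x m⌋ ≠ 0 := ((cfX_irrational h m).sub_intCast _).ne_zero
  rw [show cfX x (m+1) = if cfX x m - ⌊cfX x m⌋ = 0 then 0 else
      1 / (cfX x m - ⌊cfX x m⌋) from rfl, if_neg h2]

lemma cfX_gt_one {x : ℝ} (h : Irrational x) (m : ℕ) : 1 < cfX x (m + 1) := by
  rw [cfX_succ h m]
  have h2 : cfX x m - ⌊cfX x m⌋ ≠ 0 := ((cfX_irrational h m).sub_intCast _).ne_zero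
  have h0 : 0 < cfX x m - ⌊cfX x m⌋ :=
    lt_of_le_of_ne (by linarith [Int.floor_le (cfX x m)]) (Ne.symm h2)
  have h1 : cfX x m - ⌊cfX x m⌋ < 1 := by linarith [Int.lt_floor_add_one (cfX x m)]
  exact one_lt_one_div h0 h1

lemma cfX_rec {x : ℝ} (h : Irrational x) (m : ℕ) :
    cfX x m = cfA x m + 1 / cfX x (m + 1) := by
  have h2 : cfX x m - ⌊cfX x m⌋ ≠ 0 := ((cfX_irrational h m).sub_intCast _).ne_zero
  rw [cfX_succ h m, one_div_one_div, cfA]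
  ring

lemma cfA_ge_one {x : ℝ} (h : Irrational x) (m : ℕ) : (1 : ℝ) ≤ cfA x (m + 1) := by
  have := cfX_gt_one h m
  have : (1 : ℤ) ≤ ⌊cfX x (m+1)⌋ := Int.le_floor.mpr (by exact_mod_cast this.le)
  exact_mod_cast this

lemma eq_of_periodic_two {x : ℝ} (h : Irrational x)
    (hP : ∀ m, 1 ≤ m → cfA x (m + 2) = cfA x m) : cfX x 1 = cfX x 3 := by
  set X := cfX x with hX
  have hgt : ∀ m : ℕ, 1 < X (m + 1) := cfX_gt_one h
  have hrec : ∀ m, X m = cfA x m + 1 / X (m + 1) := cfX_rec h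
  set d : ℕ → ℝ := fun m => |X m - X (m + 2)| with hd
  have habs : ∀ m, 1 ≤ m → d m * (X (m + 1) * X (m + 3)) = d (m + 1) := by
    intro m hm
    obtain ⟨k, rfl⟩ : ∃ k, m = k + 1 := ⟨m - 1, by omega⟩
    have p1 : (0:ℝ) < X (k + 2) := by linarith [hgt (k+1)]
    have p3 : (0:ℝ) < X (k + 4) := by linarith [hgt (k+3)]
    have e1 := hrec (k+1)
    have e2 := hrec (k+3)
    rw [show k+3 = (k+1)+2 by ring, hP (k+1) (by omega)] at e2
    have key : X (k+1) - X (k+3) = -((X (k+2) - X (k+4)) / (X (k+2) * X (k+4))) := by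
      rw [e1, e2]
      field_simp
      ring
    have : d (k+1) = d (k+2) / (X (k+2) * X (k+4)) := by
      simp only [hd]
      rw [show (k+1)+2 = k+3 by ring, key, abs_neg, abs_div,
        abs_of_pos (mul_pos p1 p3), show (k+2)+2 = k+4 by ring]
    rw [this, show (k+1)+1 = k+2 by ring, show (k+1)+3 = k+4 by ring,
      div_mul_cancel₀ _ (mul_pos p1 p3).ne']
  have hprod2 : ∀ m : ℕ, 2 ≤ X (m + 1) * X (m + 2) := by
    intro m
    have e := hrec (m+1)
    have p2 : (0:ℝ) < X (m + 2) := by linarith [hgt (m+1)]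
    have hA := cfA_ge_one h m
    have : X (m+1) * X (m+2) = cfA x (m+1) * X (m+2) + 1 := by
      rw [e]; field_simp
    nlinarith [hgt (m+1)]
  have hclaim2 : ∀ m, 1 ≤ m → 2 * d m ≤ d (m + 2) := by
    intro m hm
    have h1 := habs m hm
    have h2 := habs (m+1) (by omega)
    rw [show (m+1)+1 = m+2 by ring, show (m+1)+3 = m+4 by ring] at h2
    have hd0 : 0 ≤ d m := abs_nonneg _
    have q1 := hprod2 m
    have q3 := hprod2 (m+2)
    rw [show (m+2)+1 = m+3 by ring, show (m+2)+2 = m+4 by ring] at q3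
    have q13 : 4 ≤ (X (m+1) * X (m+2)) * (X (m+3) * X (m+4)) := by nlinarith
    have heq : d (m+2) = d m * ((X (m+1) * X (m+2)) * (X (m+3) * X (m+4))) := by
      rw [← h2, ← h1]; ring
    nlinarith [hd0, q13, heq]
  have hb : ∀ m, 1 ≤ m → d m ≤ 1 := by
    intro m hm
    have hfl : (⌊X (m+2)⌋ : ℤ) = ⌊X m⌋ := hP m hm
    have hcast : ((⌊X (m+2)⌋ : ℤ) : ℝ) = ((⌊X m⌋ : ℤ) : ℝ) := by rw [hfl]
    have l1 := Int.floor_le (X m)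
    have l2 := Int.lt_floor_add_one (X m)
    have l3 := Int.floor_le (X (m+2))
    have l4 := Int.lt_floor_add_one (X (m+2))
    have : |X m - X (m+2)| ≤ 1 := abs_le.mpr ⟨by linarith, by linarith⟩
    exact this
  have hiter : ∀ k : ℕ, d 1 * 2 ^ k ≤ d (2 * k + 1) := by
    intro k
    induction k with
    | zero => simp
    | succ k ih =>
      have := hclaim2 (2*k+1) (by omega)
      rw [show 2*k+1+2 = 2*(k+1)+1 by ring] at this
      calc d 1 * 2 ^ (k+1) = (d 1 * 2 ^ k) * 2 := by ring
        _ ≤ d (2*k+1) * 2 := by nlinarith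
        _ ≤ d (2*(k+1)+1) := by linarith
  have hzero : d 1 = 0 := by
    by_contra h0
    have hpos : 0 < d 1 := lt_of_le_of_ne (abs_nonneg _) (Ne.symm h0)
    obtain ⟨k, hk⟩ := pow_unbounded_of_one_lt (1 / d 1) (by norm_num : (1:ℝ) < 2)
    have := hiter k
    have hbk := hb (2*k+1) (by omega)
    have : d 1 * 2 ^ k ≤ 1 := le_trans this hbk
    rw [div_lt_iff₀ hpos] at hk
    nlinarith
  have := abs_eq_zero.mp hzero
  have : X 1 = X 3 := by linarith [abs_eq_zero.mp hzero, sub_eq_zero.mp (abs_eq_zero.mp hzero)]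
  exact this

lemma s_irr (n j : ℕ) (hn : 0 < n) (hj1 : 2 ≤ j) (hj2 : j ≤ 2 * n) :
    Irrational (Real.sqrt ((n : ℝ) ^ 2 + (j : ℝ))) := by
  have hcast : (n : ℝ) ^ 2 + (j : ℝ) = ((n ^ 2 + j : ℕ) : ℝ) := by push_cast; ring
  rw [hcast]
  refine irrational_sqrt_natCast_iff.mpr ?_
  rintro ⟨r, hr⟩
  rcases le_or_gt r n with h | h
  · nlinarith
  · nlinarith

lemma forward (n j : ℕ) (hn : 0 < n) (hj1 : 2 ≤ j) (hj2 : j ≤ 2 * n)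
    (hP : ∀ m, 1 ≤ m → cfA (Real.sqrt ((n : ℝ) ^ 2 + (j : ℝ))) (m + 2)
      = cfA (Real.sqrt ((n : ℝ) ^ 2 + (j : ℝ))) m) : j ∣ 2 * n := by
  set s := Real.sqrt ((n : ℝ) ^ 2 + (j : ℝ)) with hs
  have hirr : Irrational s := s_irr n j hn hj1 hj2
  have hs0 : (0:ℝ) ≤ s := Real.sqrt_nonneg _
  have hsq : s ^ 2 = (n:ℝ) ^ 2 + j := Real.sq_sqrt (by positivity)
  have hjR : (0:ℝ) < j := by exact_mod_cast (by omega : 0 < j)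
  have hnR : (1:ℝ) ≤ n := by exact_mod_cast hn
  have hjle : (j:ℝ) ≤ 2 * n := by exact_mod_cast hj2
  have hj2R : (2:ℝ) ≤ j := by exact_mod_cast hj1
  have hlb : (n:ℝ) < s := by nlinarith
  have hub : s < (n:ℝ) + 1 := by nlinarith
  have hfl0 : ⌊s⌋ = (n:ℤ) := by
    rw [Int.floor_eq_iff]; constructor <;> push_cast <;> linarith
  have hX1 : cfX s 1 = (s + n) / j := by
    rw [cfX_succ hirr 0, cfX_zero, hfl0]
    rw [show ((n:ℤ):ℝ) = (n:ℝ) by push_cast; ring]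
    rw [div_eq_div_iff (by linarith : s - (n:ℝ) ≠ 0) hjR.ne']
    linear_combination -hsq
  have hirr1 : Irrational (cfX s 1) := cfX_irrational hirr 1
  have hgt1 : 1 < cfX s 1 := cfX_gt_one hirr 0
  have hgt2 : 1 < cfX s 2 := cfX_gt_one hirr 1
  have h13 : cfX s 1 = cfX s 3 := eq_of_periodic_two hirr hP
  have e1 := cfX_rec hirr 1
  have e2 := cfX_rec hirr 2
  norm_num at e1 e2
  rw [← h13] at e2
  set t := cfX s 1 with hts
  set a := cfA s 1 with has
  set b := cfA s 2 with hbs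
  have ht0 : t ≠ 0 := by
    have : (0:ℝ) < t := by linarith
    exact this.ne'
  have hX2ne : cfX s 2 ≠ 0 := by
    have : (0:ℝ) < cfX s 2 := by linarith
    exact this.ne'
  have key : (b:ℝ) * t ^ 2 = a * b * t + a := by
    have h1 : (t - (a:ℝ)) * cfX s 2 = 1 := by
      have hh : t - (a:ℝ) = (cfX s 2)⁻¹ := by linarith [e1]
      rw [hh, inv_mul_cancel₀ hX2ne]
    rw [e2] at h1
    field_simp at h1
    linear_combination h1
  have hquad : (j:ℝ) * t ^ 2 = 2 * n * t + 1 := by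
    rw [hX1]
    field_simp
    linear_combination hsq
  have comb : ((2 * n * b - j * a * b : ℤ) : ℝ) * t = ((j * a - b : ℤ) : ℝ) := by
    push_cast
    linear_combination (j:ℝ) * key - (b:ℝ) * hquad
  have hc0 : (2 * n * b - j * a * b : ℤ) = 0 := by
    by_contra hc
    have hcr : ((2 * n * b - j * a * b : ℤ) : ℝ) ≠ 0 := by exact_mod_cast hc
    have htval : t = ((j * a - b : ℤ) : ℝ) / ((2 * n * b - j * a * b : ℤ) : ℝ) := by
      rw [eq_div_iff hcr]; linarith [comb, mul_comm t ((2 * n * b - j * a * b : ℤ) : ℝ)]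
    exact hirr1 ⟨((j * a - b : ℤ) : ℚ) / ((2 * n * b - j * a * b : ℤ) : ℚ),
      by rw [htval]; push_cast; ring⟩
  have hd0 : (j * a - b : ℤ) = 0 := by
    have : ((j * a - b : ℤ) : ℝ) = 0 := by rw [← comb, hc0]; push_cast; ring
    exact_mod_cast this
  have hb1 : (1:ℤ) ≤ b := by
    have := cfA_ge_one hirr 1
    rw [← hbs] at this
    exact_mod_cast this
  have hja : (j:ℤ) * a = 2 * n := by
    have hfac : (b:ℤ) * (2 * n - j * a) = 0 := by linear_combination hc0
    rcases mul_eq_zero.mp hfac with h | h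
    · omega
    · omega
  have : (j:ℤ) ∣ ((2 * n : ℕ) : ℤ) := ⟨a, by push_cast; linarith [hja]⟩
  exact_mod_cast this

lemma backward (n j : ℕ) (hn : 0 < n) (hj1 : 2 ≤ j) (hj2 : j ≤ 2 * n) (hd : j ∣ 2 * n) :
    ⌊Real.sqrt ((n : ℝ) ^ 2 + (j : ℝ))⌋ = (n : ℤ) ∧
    (∀ k : ℕ, cfX (Real.sqrt ((n : ℝ) ^ 2 + (j : ℝ))) (2 * k + 1)
        = (Real.sqrt ((n : ℝ) ^ 2 + (j : ℝ)) + n) / j ∧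
      cfX (Real.sqrt ((n : ℝ) ^ 2 + (j : ℝ))) (2 * k + 2)
        = Real.sqrt ((n : ℝ) ^ 2 + (j : ℝ)) + n) ∧
    ⌊(Real.sqrt ((n : ℝ) ^ 2 + (j : ℝ)) + n) / j⌋ = ((2 * n / j : ℕ) : ℤ) ∧
    ⌊Real.sqrt ((n : ℝ) ^ 2 + (j : ℝ)) + (n : ℝ)⌋ = 2 * (n : ℤ) := by
  set s := Real.sqrt ((n : ℝ) ^ 2 + (j : ℝ)) with hs
  have hirr : Irrational s := s_irr n j hn hj1 hj2
  have hs0 : (0:ℝ) ≤ s := Real.sqrt_nonneg _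
  have hsq : s ^ 2 = (n:ℝ) ^ 2 + j := Real.sq_sqrt (by positivity)
  have hjR : (0:ℝ) < j := by exact_mod_cast (by omega : 0 < j)
  have hnR : (1:ℝ) ≤ n := by exact_mod_cast hn
  have hjle : (j:ℝ) ≤ 2 * n := by exact_mod_cast hj2
  have hj2R : (2:ℝ) ≤ j := by exact_mod_cast hj1
  have hlb : (n:ℝ) < s := by nlinarith
  have hub : s < (n:ℝ) + 1 := by nlinarith
  have hfl0 : ⌊s⌋ = (n:ℤ) := by
    rw [Int.floor_eq_iff]; constructor <;> push_cast <;> linarith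
  set q := 2 * n / j with hq
  have hqj : q * j = 2 * n := Nat.div_mul_cancel hd
  have hqjR : (q:ℝ) * j = 2 * n := by exact_mod_cast hqj
  have fl1 : ⌊(s + (n:ℝ)) / j⌋ = (q : ℤ) := by
    rw [Int.floor_eq_iff]
    constructor
    · rw [le_div_iff₀ hjR]; push_cast; nlinarith
    · rw [div_lt_iff₀ hjR]; push_cast; nlinarith
  have fl2 : ⌊s + (n:ℝ)⌋ = 2 * (n:ℤ) := by
    rw [Int.floor_eq_iff]; constructor <;> push_cast <;> linarith
  have hsne : s - (n:ℝ) ≠ 0 := by linarith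
  have stepA : ∀ m, cfX s m = (s + n) / j → cfX s (m + 1) = s + n := by
    intro m hm
    rw [cfX_succ hirr m, hm, fl1]
    have hden : (s + (n:ℝ)) / j - (q:ℤ) = (s - n) / j := by
      push_cast
      field_simp
      linear_combination -hqjR
    rw [hden, one_div_div]
    rw [div_eq_iff hsne]
    linear_combination -hsq
  have stepB : ∀ m, cfX s m = s + n → cfX s (m + 1) = (s + n) / j := by
    intro m hm
    rw [cfX_succ hirr m, hm, fl2]
    have hden : s + (n:ℝ) - ((2 * (n:ℤ) : ℤ) : ℝ) = s - n := by push_cast; ring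
    rw [hden, div_eq_div_iff hsne hjR.ne']
    linear_combination -hsq
  have hX1 : cfX s 1 = (s + n) / j := by
    rw [show (1:ℕ) = 0 + 1 from rfl, cfX_succ hirr 0, cfX_zero, hfl0]
    rw [show ((n:ℤ):ℝ) = (n:ℝ) by push_cast; ring]
    rw [div_eq_div_iff hsne hjR.ne']
    linear_combination -hsq
  have pattern : ∀ k : ℕ, cfX s (2 * k + 1) = (s + n) / j ∧ cfX s (2 * k + 2) = s + n := by
    intro k
    induction k with
    | zero => exact ⟨hX1, stepA 1 hX1⟩
    | succ k ih =>
      have h1 : cfX s (2 * (k + 1) + 1) = (s + n) / j := by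
        rw [show 2 * (k + 1) + 1 = (2 * k + 2) + 1 by ring]
        exact stepB _ ih.2
      exact ⟨h1, stepA _ h1⟩
  exact ⟨hfl0, pattern, fl1, fl2⟩

/-- For `j ≥ 2`, the continued fraction of `√(n²+j)` has period of length 2 iff
`j ∣ 2n`, in which case `√(n²+j) = [n; 2n/j, 2n repeated]`. -/
theorem sqrt_period_two_iff (n j : ℕ) (hn : 0 < n) (hj1 : 2 ≤ j) (hj2 : j ≤ 2 * n) :
    (sInf {p : ℕ | 0 < p ∧ ∀ m : ℕ, 1 ≤ m →
        cfA (Real.sqrt ((n : ℝ) ^ 2 + (j : ℝ))) (m + p) = cfA (Real.sqrt ((n : ℝ) ^ 2 + (j : ℝ))) m} = 2 ↔ j ∣ 2 * n) ∧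
      (j ∣ 2 * n → cfA (Real.sqrt ((n : ℝ) ^ 2 + (j : ℝ))) 0 = n ∧
        ∀ k : ℕ, cfA (Real.sqrt ((n : ℝ) ^ 2 + (j : ℝ))) (2 * k + 1) = (2 * n / j : ℕ) ∧
          cfA (Real.sqrt ((n : ℝ) ^ 2 + (j : ℝ))) (2 * k + 2) = 2 * n) := by
  set s := Real.sqrt ((n : ℝ) ^ 2 + (j : ℝ)) with hs
  have hvals : j ∣ 2 * n → (cfA s 0 = (n:ℤ) ∧ ∀ k : ℕ,
      cfA s (2 * k + 1) = ((2 * n / j : ℕ) : ℤ) ∧ cfA s (2 * k + 2) = 2 * (n:ℤ)) := by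
    intro hd
    obtain ⟨hfl0, pattern, fl1, fl2⟩ := backward n j hn hj1 hj2 hd
    refine ⟨hfl0, fun k => ⟨?_, ?_⟩⟩
    · show ⌊cfX s (2 * k + 1)⌋ = _
      rw [(pattern k).1]; exact fl1
    · show ⌊cfX s (2 * k + 2)⌋ = _
      rw [(pattern k).2]; exact fl2
  have hper : j ∣ 2 * n → ∀ m, 1 ≤ m → cfA s (m + 2) = cfA s m := by
    intro hd m hm
    obtain ⟨-, hv⟩ := hvals hd
    rcases Nat.even_or_odd m with ⟨k, hk⟩ | ⟨k, hk⟩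
    · obtain ⟨k', rfl⟩ : ∃ k', m = 2 * k' + 2 := ⟨(m - 2) / 2, by omega⟩
      rw [show 2 * k' + 2 + 2 = 2 * (k' + 1) + 2 by ring, (hv (k' + 1)).2, (hv k').2]
    · obtain ⟨k', rfl⟩ : ∃ k', m = 2 * k' + 1 := ⟨k, by omega⟩
      rw [show 2 * k' + 1 + 2 = 2 * (k' + 1) + 1 by ring, (hv (k' + 1)).1, (hv k').1]
  have hA12 : j ∣ 2 * n → cfA s 2 ≠ cfA s 1 := by
    intro hd
    obtain ⟨-, hv⟩ := hvals hd
    have h1 := (hv 0).1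
    have h2 := (hv 0).2
    norm_num at h1 h2
    rw [h1, h2]
    have hqle : 2 * n / j ≤ n := by
      calc 2 * n / j ≤ 2 * n / 2 := Nat.div_le_div_left hj1 two_pos
        _ = n := by omega
    intro heq
    have : 2 * n = 2 * n / j := by exact_mod_cast heq
    omega
  constructor
  · constructor
    · intro hEq
      have hne : Set.Nonempty {p : ℕ | 0 < p ∧ ∀ m : ℕ, 1 ≤ m →
          cfA s (m + p) = cfA s m} := by
        by_contra hcon
        rw [Set.not_nonempty_iff_eq_empty] at hcon
        rw [hcon, Nat.sInf_empty] at hEq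
        exact (by omega : (0:ℕ) ≠ 2) hEq
      have hmem := Nat.sInf_mem hne
      rw [hEq] at hmem
      exact forward n j hn hj1 hj2 hmem.2
    · intro hd
      have h2S : 2 ∈ {p : ℕ | 0 < p ∧ ∀ m : ℕ, 1 ≤ m →
          cfA s (m + p) = cfA s m} := ⟨by norm_num, hper hd⟩
      refine le_antisymm (Nat.sInf_le h2S) ?_
      obtain ⟨hpos, hsp⟩ := Nat.sInf_mem ⟨2, h2S⟩
      by_contra hlt
      push_neg at hlt
      have h1 : sInf {p : ℕ | 0 < p ∧ ∀ m : ℕ, 1 ≤ m →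
          cfA s (m + p) = cfA s m} = 1 := by omega
      rw [h1] at hsp
      have := hsp 1 le_rfl
      norm_num at this
      exact hA12 hd this
  · intro hd
    obtain ⟨h0, hv⟩ := hvals hd
    exact ⟨h0, hv⟩
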